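/- (Pessimistic regularized evaluation is a valid lower bound up to slack) Suppose for policy π there exists f_π ∈ F with E(f_π,π;D) ≤ ε_r and ||f_π − T^π f_π||_{2,d_π} ≤ sqrt(ε_F). Then min_{f∈F}(f(s_0,π) + λ E(f,π;D)) ≤ J(π) + sqrt(ε_F)/(1−γ) + λ ε_r and max_{f∈F}(f(s_0,π) − λ E(f,π;D)) ≥ J(π) − sqrt(ε_F)/(1−γ) − λ ε_r, for any λ ≥ 0. -/

import Mathlib

open Finset

/-- Distribution of the state-action pair at time `t` under policy `π` started at `s0`. -/
def stepDist {S A : Type*} [Fintype S] [Fintype A] [DecidableEq S]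
    (P : S → A → S → ℝ) (π : S → A → ℝ) (s0 : S) : ℕ → S × A → ℝ
  | 0 => fun p => (if p.1 = s0 then (1 : ℝ) else 0) * π p.1 p.2
  | (t + 1) => fun p => ∑ q : S × A, stepDist P π s0 t q * P q.1 q.2 p.1 * π p.1 p.2

/-- Normalized discounted state-action occupancy of `π` started at `s0`. -/
noncomputable def occ {S A : Type*} [Fintype S] [Fintype A] [DecidableEq S]
    (P : S → A → S → ℝ) (γ : ℝ) (s0 : S) (π : S → A → ℝ) (p : S × A) : ℝ :=
  (1 - γ) * ∑' t : ℕ, γ ^ t * stepDist P π s0 t p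

/-- Expected discounted return of `π` started at `s0`. -/
noncomputable def ret {S A : Type*} [Fintype S] [Fintype A] [DecidableEq S]
    (P : S → A → S → ℝ) (γ : ℝ) (s0 : S) (R : S → A → ℝ) (π : S → A → ℝ) : ℝ :=
  ∑' t : ℕ, γ ^ t * ∑ p : S × A, stepDist P π s0 t p * R p.1 p.2

open Filter

section Helpers

variable {S A : Type*} [Fintype S] [Fintype A] [DecidableEq S]

lemma stepDist_nonneg (P : S → A → S → ℝ) (hP0 : ∀ s a s', 0 ≤ P s a s')
    (π : S → A → ℝ) (hπ0 : ∀ s a, 0 ≤ π s a) (s0 : S) :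
    ∀ t p, 0 ≤ stepDist P π s0 t p := by
  intro t
  induction t with
  | zero =>
    intro p
    refine mul_nonneg ?_ (hπ0 _ _)
    split <;> norm_num
  | succ t ih =>
    intro p
    refine Finset.sum_nonneg fun q _ => ?_
    exact mul_nonneg (mul_nonneg (ih q) (hP0 _ _ _)) (hπ0 _ _)

lemma stepDist_succ_exp (P : S → A → S → ℝ) (π : S → A → ℝ) (s0 : S) (t : ℕ) (g : S → A → ℝ) :
    ∑ p : S × A, stepDist P π s0 (t+1) p * g p.1 p.2
      = ∑ q : S × A, stepDist P π s0 t q *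
          ∑ s', P q.1 q.2 s' * ∑ a', π s' a' * g s' a' := by
  simp only [stepDist, Finset.sum_mul]
  rw [Finset.sum_comm]
  refine Finset.sum_congr rfl fun q _ => ?_
  rw [Fintype.sum_prod_type, Finset.mul_sum]
  refine Finset.sum_congr rfl fun s' _ => ?_
  rw [Finset.mul_sum, Finset.mul_sum]
  refine Finset.sum_congr rfl fun a' _ => ?_
  ring

lemma stepDist_sum_one (P : S → A → S → ℝ) (hP1 : ∀ s a, ∑ s', P s a s' = 1)
    (π : S → A → ℝ) (hπ1 : ∀ s, ∑ a, π s a = 1) (s0 : S) :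
    ∀ t, ∑ p : S × A, stepDist P π s0 t p = 1 := by
  intro t
  induction t with
  | zero =>
    simp [stepDist, Fintype.sum_prod_type, ← Finset.mul_sum, hπ1]
  | succ t ih =>
    have h := stepDist_succ_exp P π s0 t (fun _ _ => (1:ℝ))
    simp only [mul_one] at h
    calc ∑ p : S × A, stepDist P π s0 (t+1) p
        = ∑ p : S × A, stepDist P π s0 (t+1) p * 1 := by simp
      _ = 1 := by
          rw [stepDist_succ_exp P π s0 t (fun _ _ => (1:ℝ))]
          simp only [mul_one, hπ1, hP1]
          simpa using ih

lemma stepDist_le_one (P : S → A → S → ℝ) (hP0 : ∀ s a s', 0 ≤ P s a s')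
    (hP1 : ∀ s a, ∑ s', P s a s' = 1)
    (π : S → A → ℝ) (hπ0 : ∀ s a, 0 ≤ π s a) (hπ1 : ∀ s, ∑ a, π s a = 1)
    (s0 : S) (t : ℕ) (p : S × A) : stepDist P π s0 t p ≤ 1 := by
  have h := Finset.single_le_sum (f := fun q => stepDist P π s0 t q)
    (fun q _ => stepDist_nonneg P hP0 π hπ0 s0 t q) (Finset.mem_univ p)
  simpa [stepDist_sum_one P hP1 π hπ1 s0 t] using h

lemma exp_abs_le (P : S → A → S → ℝ) (hP0 : ∀ s a s', 0 ≤ P s a s')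
    (hP1 : ∀ s a, ∑ s', P s a s' = 1)
    (π : S → A → ℝ) (hπ0 : ∀ s a, 0 ≤ π s a) (hπ1 : ∀ s, ∑ a, π s a = 1)
    (s0 : S) (t : ℕ) (g : S → A → ℝ) (C : ℝ) (hg : ∀ s a, |g s a| ≤ C) :
    |∑ p : S × A, stepDist P π s0 t p * g p.1 p.2| ≤ C := by
  calc |∑ p : S × A, stepDist P π s0 t p * g p.1 p.2|
      ≤ ∑ p : S × A, |stepDist P π s0 t p * g p.1 p.2| := Finset.abs_sum_le_sum_abs _ _
    _ ≤ ∑ p : S × A, stepDist P π s0 t p * C := by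
        refine Finset.sum_le_sum fun p _ => ?_
        rw [abs_mul, abs_of_nonneg (stepDist_nonneg P hP0 π hπ0 s0 t p)]
        exact mul_le_mul_of_nonneg_left (hg _ _) (stepDist_nonneg P hP0 π hπ0 s0 t p)
    _ = C := by rw [← Finset.sum_mul, stepDist_sum_one P hP1 π hπ1 s0 t, one_mul]

lemma summable_exp (P : S → A → S → ℝ) (hP0 : ∀ s a s', 0 ≤ P s a s')
    (hP1 : ∀ s a, ∑ s', P s a s' = 1)
    (π : S → A → ℝ) (hπ0 : ∀ s a, 0 ≤ π s a) (hπ1 : ∀ s, ∑ a, π s a = 1)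
    (s0 : S) (γ : ℝ) (hγ0 : 0 ≤ γ) (hγ1 : γ < 1)
    (g : S → A → ℝ) (C : ℝ) (hg : ∀ s a, |g s a| ≤ C) :
    Summable (fun t : ℕ => γ ^ t * ∑ p : S × A, stepDist P π s0 t p * g p.1 p.2) := by
  refine Summable.of_norm_bounded (g := fun t : ℕ => C * γ ^ t)
    ((summable_geometric_of_lt_one hγ0 hγ1).mul_left C) fun t => ?_
  rw [Real.norm_eq_abs, abs_mul, abs_of_nonneg (pow_nonneg hγ0 t), mul_comm]
  exact mul_le_mul_of_nonneg_right (exp_abs_le P hP0 hP1 π hπ0 hπ1 s0 t g C hg) (pow_nonneg hγ0 t)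

lemma summable_point (P : S → A → S → ℝ) (hP0 : ∀ s a s', 0 ≤ P s a s')
    (hP1 : ∀ s a, ∑ s', P s a s' = 1)
    (π : S → A → ℝ) (hπ0 : ∀ s a, 0 ≤ π s a) (hπ1 : ∀ s, ∑ a, π s a = 1)
    (s0 : S) (γ : ℝ) (hγ0 : 0 ≤ γ) (hγ1 : γ < 1) (p : S × A) :
    Summable (fun t : ℕ => γ ^ t * stepDist P π s0 t p) := by
  refine Summable.of_norm_bounded (g := fun t : ℕ => γ ^ t)
    (summable_geometric_of_lt_one hγ0 hγ1) fun t => ?_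
  rw [Real.norm_eq_abs, abs_mul, abs_of_nonneg (pow_nonneg hγ0 t),
    abs_of_nonneg (stepDist_nonneg P hP0 π hπ0 s0 t p)]
  exact mul_le_of_le_one_right (pow_nonneg hγ0 t)
    (stepDist_le_one P hP0 hP1 π hπ0 hπ1 s0 t p)

lemma tsum_exp_eq (P : S → A → S → ℝ) (hP0 : ∀ s a s', 0 ≤ P s a s')
    (hP1 : ∀ s a, ∑ s', P s a s' = 1)
    (π : S → A → ℝ) (hπ0 : ∀ s a, 0 ≤ π s a) (hπ1 : ∀ s, ∑ a, π s a = 1)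
    (s0 : S) (γ : ℝ) (hγ0 : 0 ≤ γ) (hγ1 : γ < 1) (g : S → A → ℝ) :
    ∑' t : ℕ, γ ^ t * ∑ p : S × A, stepDist P π s0 t p * g p.1 p.2
      = (∑ p : S × A, occ P γ s0 π p * g p.1 p.2) / (1 - γ) := by
  have hne : (1 : ℝ) - γ ≠ 0 := by linarith
  rw [eq_div_iff hne]
  have : ∑ p : S × A, occ P γ s0 π p * g p.1 p.2
      = (1 - γ) * ∑ p : S × A, (∑' t : ℕ, γ ^ t * stepDist P π s0 t p) * g p.1 p.2 := by
    rw [Finset.mul_sum]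
    refine Finset.sum_congr rfl fun p _ => ?_
    rw [occ]; ring
  rw [this, mul_comm ((1:ℝ) - γ)]
  congr 1
  calc ∑' t : ℕ, γ ^ t * ∑ p : S × A, stepDist P π s0 t p * g p.1 p.2
      = ∑' t : ℕ, ∑ p : S × A, γ ^ t * stepDist P π s0 t p * g p.1 p.2 := by
        refine tsum_congr fun t => ?_
        rw [Finset.mul_sum]; exact Finset.sum_congr rfl fun p _ => by ring
    _ = ∑ p : S × A, ∑' t : ℕ, γ ^ t * stepDist P π s0 t p * g p.1 p.2 := by
        refine Summable.tsum_finsetSum fun p _ => ?_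
        exact (summable_point P hP0 hP1 π hπ0 hπ1 s0 γ hγ0 hγ1 p).mul_right _
    _ = ∑ p : S × A, (∑' t : ℕ, γ ^ t * stepDist P π s0 t p) * g p.1 p.2 := by
        refine Finset.sum_congr rfl fun p _ => ?_
        rw [tsum_mul_right]

lemma inner_exp_abs_le (P : S → A → S → ℝ) (hP0 : ∀ s a s', 0 ≤ P s a s')
    (hP1 : ∀ s a, ∑ s', P s a s' = 1)
    (π : S → A → ℝ) (hπ0 : ∀ s a, 0 ≤ π s a) (hπ1 : ∀ s, ∑ a, π s a = 1)
    (f : S → A → ℝ) (C : ℝ) (hf : ∀ s a, |f s a| ≤ C) (s : S) (a : A) :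
    |∑ s', P s a s' * ∑ a', π s' a' * f s' a'| ≤ C := by
  have hin : ∀ s', |∑ a', π s' a' * f s' a'| ≤ C := by
    intro s'
    calc |∑ a', π s' a' * f s' a'| ≤ ∑ a', |π s' a' * f s' a'| := Finset.abs_sum_le_sum_abs _ _
      _ ≤ ∑ a', π s' a' * C := by
          refine Finset.sum_le_sum fun a' _ => ?_
          rw [abs_mul, abs_of_nonneg (hπ0 _ _)]
          exact mul_le_mul_of_nonneg_left (hf _ _) (hπ0 _ _)
      _ = C := by rw [← Finset.sum_mul, hπ1, one_mul]
  calc |∑ s', P s a s' * ∑ a', π s' a' * f s' a'|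
      ≤ ∑ s', |P s a s' * ∑ a', π s' a' * f s' a'| := Finset.abs_sum_le_sum_abs _ _
    _ ≤ ∑ s', P s a s' * C := by
        refine Finset.sum_le_sum fun s' _ => ?_
        rw [abs_mul, abs_of_nonneg (hP0 _ _ _)]
        exact mul_le_mul_of_nonneg_left (hin s') (hP0 _ _ _)
    _ = C := by rw [← Finset.sum_mul, hP1, one_mul]

lemma exp_zero (P : S → A → S → ℝ) (π : S → A → ℝ) (s0 : S) (f : S → A → ℝ) :
    ∑ p : S × A, stepDist P π s0 0 p * f p.1 p.2 = ∑ a, π s0 a * f s0 a := by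
  rw [Fintype.sum_prod_type]
  simp [stepDist, Finset.sum_ite_eq]

lemma telescope (P : S → A → S → ℝ) (hP0 : ∀ s a s', 0 ≤ P s a s')
    (hP1 : ∀ s a, ∑ s', P s a s' = 1)
    (R : S → A → ℝ) (Rmax : ℝ) (hR : ∀ s a, |R s a| ≤ Rmax)
    (γ : ℝ) (hγ0 : 0 ≤ γ) (hγ1 : γ < 1) (s0 : S)
    (π : S → A → ℝ) (hπ0 : ∀ s a, 0 ≤ π s a) (hπ1 : ∀ s, ∑ a, π s a = 1)
    (Vmax : ℝ) (f : S → A → ℝ) (hf : ∀ s a, |f s a| ≤ Vmax) :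
    (∑ a, π s0 a * f s0 a) - ret P γ s0 R π
      = (∑ p : S × A, occ P γ s0 π p *
          (f p.1 p.2 - (R p.1 p.2 + γ * ∑ s', P p.1 p.2 s' * ∑ a', π s' a' * f s' a')))
        / (1 - γ) := by
  set δ : S → A → ℝ := fun s a =>
    f s a - (R s a + γ * ∑ s', P s a s' * ∑ a', π s' a' * f s' a') with hδ
  have hδb : ∀ s a, |δ s a| ≤ Vmax + (Rmax + γ * Vmax) := by
    intro s a
    have h1 := hf s a
    have h2 := hR s a
    have h3 := inner_exp_abs_le P hP0 hP1 π hπ0 hπ1 f Vmax hf s a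
    have h4 : |γ * ∑ s', P s a s' * ∑ a', π s' a' * f s' a'| ≤ γ * Vmax := by
      rw [abs_mul, abs_of_nonneg hγ0]
      exact mul_le_mul_of_nonneg_left h3 hγ0
    calc |δ s a| ≤ |f s a| + |R s a + γ * ∑ s', P s a s' * ∑ a', π s' a' * f s' a'| :=
          abs_sub _ _
      _ ≤ |f s a| + (|R s a| + |γ * ∑ s', P s a s' * ∑ a', π s' a' * f s' a'|) := by
          gcongr; exact abs_add_le _ _
      _ ≤ Vmax + (Rmax + γ * Vmax) := by gcongr
  set b : ℕ → ℝ := fun t => γ ^ t * ∑ p : S × A, stepDist P π s0 t p * f p.1 p.2 with hb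
  have hstep : ∀ t, γ ^ t * (∑ p : S × A, stepDist P π s0 t p * R p.1 p.2)
      + γ ^ t * (∑ p : S × A, stepDist P π s0 t p * δ p.1 p.2) = b t - b (t + 1) := by
    intro t
    have h1 : b (t + 1) = γ ^ (t+1) * ∑ q : S × A, stepDist P π s0 t q *
        ∑ s', P q.1 q.2 s' * ∑ a', π s' a' * f s' a' := by
      simp only [hb]
      rw [stepDist_succ_exp P π s0 t f]
    have key : (∑ p : S × A, stepDist P π s0 t p * R p.1 p.2)
        + (∑ p : S × A, stepDist P π s0 t p * δ p.1 p.2)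
        = (∑ p : S × A, stepDist P π s0 t p * f p.1 p.2)
          - γ * ∑ q : S × A, stepDist P π s0 t q *
              ∑ s', P q.1 q.2 s' * ∑ a', π s' a' * f s' a' := by
      rw [← Finset.sum_add_distrib, Finset.mul_sum, ← Finset.sum_sub_distrib]
      refine Finset.sum_congr rfl fun p _ => ?_
      simp only [hδ]
      ring
    calc γ ^ t * (∑ p : S × A, stepDist P π s0 t p * R p.1 p.2)
          + γ ^ t * (∑ p : S × A, stepDist P π s0 t p * δ p.1 p.2)
        = γ ^ t * ((∑ p : S × A, stepDist P π s0 t p * R p.1 p.2)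
            + (∑ p : S × A, stepDist P π s0 t p * δ p.1 p.2)) := by ring
      _ = γ ^ t * ((∑ p : S × A, stepDist P π s0 t p * f p.1 p.2)
          - γ * ∑ q : S × A, stepDist P π s0 t q *
              ∑ s', P q.1 q.2 s' * ∑ a', π s' a' * f s' a') := by rw [key]
      _ = b t - b (t + 1) := by
          rw [h1]; simp only [hb]; ring
  have hSR : Summable (fun t : ℕ => γ ^ t * ∑ p : S × A, stepDist P π s0 t p * R p.1 p.2) :=
    summable_exp P hP0 hP1 π hπ0 hπ1 s0 γ hγ0 hγ1 R Rmax hR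
  have hSδ : Summable (fun t : ℕ => γ ^ t * ∑ p : S × A, stepDist P π s0 t p * δ p.1 p.2) :=
    summable_exp P hP0 hP1 π hπ0 hπ1 s0 γ hγ0 hγ1 δ _ hδb
  have hpartial : ∀ T, ∑ t ∈ Finset.range T,
      ((γ ^ t * ∑ p : S × A, stepDist P π s0 t p * R p.1 p.2)
        + (γ ^ t * ∑ p : S × A, stepDist P π s0 t p * δ p.1 p.2)) = b 0 - b T := by
    intro T
    rw [Finset.sum_congr rfl fun t _ => hstep t]
    exact Finset.sum_range_sub' b T
  have hbT : Tendsto b atTop (nhds 0) := by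
    have hbnd : ∀ T, ‖b T‖ ≤ Vmax * γ ^ T := by
      intro T
      rw [hb, Real.norm_eq_abs, abs_mul, abs_of_nonneg (pow_nonneg hγ0 T), mul_comm]
      exact mul_le_mul_of_nonneg_right
        (exp_abs_le P hP0 hP1 π hπ0 hπ1 s0 T f Vmax hf) (pow_nonneg hγ0 T)
    refine squeeze_zero_norm hbnd ?_
    have := tendsto_pow_atTop_nhds_zero_of_lt_one hγ0 hγ1
    simpa using this.const_mul Vmax
  have hlim1 : Tendsto (fun T => ∑ t ∈ Finset.range T,
      ((γ ^ t * ∑ p : S × A, stepDist P π s0 t p * R p.1 p.2)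
        + (γ ^ t * ∑ p : S × A, stepDist P π s0 t p * δ p.1 p.2))) atTop
      (nhds (ret P γ s0 R π + ∑' t : ℕ, γ ^ t * ∑ p : S × A, stepDist P π s0 t p * δ p.1 p.2)) := by
    have h := (hSR.hasSum.add hSδ.hasSum).tendsto_sum_nat
    exact h
  have hlim2 : Tendsto (fun T => b 0 - b T) atTop (nhds (b 0 - 0)) :=
    tendsto_const_nhds.sub hbT
  have heq : ret P γ s0 R π
      + (∑' t : ℕ, γ ^ t * ∑ p : S × A, stepDist P π s0 t p * δ p.1 p.2) = b 0 - 0 := by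
    refine tendsto_nhds_unique ?_ hlim2
    refine hlim1.congr fun T => (hpartial T)
  rw [tsum_exp_eq P hP0 hP1 π hπ0 hπ1 s0 γ hγ0 hγ1 δ] at heq
  have hb0 : b 0 = ∑ a, π s0 a * f s0 a := by
    rw [hb]; simp [exp_zero]
  rw [hb0, sub_zero] at heq
  linarith [heq]

lemma occ_nonneg (P : S → A → S → ℝ) (hP0 : ∀ s a s', 0 ≤ P s a s')
    (π : S → A → ℝ) (hπ0 : ∀ s a, 0 ≤ π s a)
    (s0 : S) (γ : ℝ) (hγ0 : 0 ≤ γ) (hγ1 : γ < 1) (p : S × A) :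
    0 ≤ occ P γ s0 π p := by
  refine mul_nonneg (by linarith) (tsum_nonneg fun t => ?_)
  exact mul_nonneg (pow_nonneg hγ0 t) (stepDist_nonneg P hP0 π hπ0 s0 t p)

lemma occ_sum_one (P : S → A → S → ℝ) (hP0 : ∀ s a s', 0 ≤ P s a s')
    (hP1 : ∀ s a, ∑ s', P s a s' = 1)
    (π : S → A → ℝ) (hπ0 : ∀ s a, 0 ≤ π s a) (hπ1 : ∀ s, ∑ a, π s a = 1)
    (s0 : S) (γ : ℝ) (hγ0 : 0 ≤ γ) (hγ1 : γ < 1) :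
    ∑ p : S × A, occ P γ s0 π p = 1 := by
  have hne : (1 : ℝ) - γ ≠ 0 := by linarith
  have h := tsum_exp_eq P hP0 hP1 π hπ0 hπ1 s0 γ hγ0 hγ1 (fun _ _ => (1:ℝ))
  simp only [mul_one, stepDist_sum_one P hP1 π hπ1 s0] at h
  rw [tsum_geometric_of_lt_one hγ0 hγ1] at h
  field_simp at h
  linarith [h]

lemma cs_bound (w v : S × A → ℝ) (hw : ∀ p, 0 ≤ w p) (hw1 : ∑ p : S × A, w p = 1) :
    |∑ p : S × A, w p * v p| ≤ Real.sqrt (∑ p : S × A, w p * (v p) ^ 2) := by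
  have h1 : |∑ p : S × A, w p * v p| ≤ ∑ p : S × A, w p * |v p| := by
    calc |∑ p : S × A, w p * v p| ≤ ∑ p : S × A, |w p * v p| := Finset.abs_sum_le_sum_abs _ _
      _ = ∑ p : S × A, w p * |v p| := by
          refine Finset.sum_congr rfl fun p _ => ?_
          rw [abs_mul, abs_of_nonneg (hw p)]
  refine h1.trans ?_
  have hnn : 0 ≤ ∑ p : S × A, w p * |v p| :=
    Finset.sum_nonneg fun p _ => mul_nonneg (hw p) (abs_nonneg _)
  rw [show (∑ p : S × A, w p * |v p|)
      = ∑ p : S × A, Real.sqrt (w p) * (Real.sqrt (w p) * |v p|) from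
    Finset.sum_congr rfl fun p _ => by
      rw [← mul_assoc, Real.mul_self_sqrt (hw p)]] at hnn ⊢
  have hcs := Finset.sum_mul_sq_le_sq_mul_sq Finset.univ
    (fun p : S × A => Real.sqrt (w p)) (fun p => Real.sqrt (w p) * |v p|)
  have h2 : (∑ p : S × A, Real.sqrt (w p) * (Real.sqrt (w p) * |v p|)) ^ 2
      ≤ ∑ p : S × A, w p * v p ^ 2 := by
    refine hcs.trans_eq ?_
    rw [show (∑ p : S × A, Real.sqrt (w p) ^ 2) = 1 by
      rw [← hw1]; exact Finset.sum_congr rfl fun p _ => Real.sq_sqrt (hw p), one_mul]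
    refine Finset.sum_congr rfl fun p _ => ?_
    rw [mul_pow, Real.sq_sqrt (hw p), sq_abs]
  have hnn2 : 0 ≤ ∑ p : S × A, w p * v p ^ 2 :=
    Finset.sum_nonneg fun p _ => mul_nonneg (hw p) (sq_nonneg _)
  exact (Real.le_sqrt hnn hnn2).mpr h2


end Helpers

/-- Pessimistic regularized evaluation is a valid lower bound up to slack: if some `fπ ∈ F`
has `E(fπ,π;D) ≤ ε_r` and `‖fπ − T^π fπ‖_{2,d_π} ≤ √ε_F`, then for any `λ ≥ 0`,
`min_{f∈F} (f(s0,π) + λ E(f,π;D)) ≤ J(π) + √ε_F/(1−γ) + λ ε_r` and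
`max_{f∈F} (f(s0,π) − λ E(f,π;D)) ≥ J(π) − √ε_F/(1−γ) − λ ε_r`. -/

theorem regularized_pessimism_valid_bounds
    {S A : Type*} [Fintype S] [Fintype A] [DecidableEq S]
    (P : S → A → S → ℝ) (hP0 : ∀ s a s', 0 ≤ P s a s') (hP1 : ∀ s a, ∑ s', P s a s' = 1)
    (R : S → A → ℝ) (Rmax : ℝ) (hR : ∀ s a, R s a ∈ Set.Icc (0 : ℝ) Rmax)
    (γ : ℝ) (hγ0 : 0 ≤ γ) (hγ1 : γ < 1) (s0 : S)
    (π : S → A → ℝ) (hπ0 : ∀ s a, 0 ≤ π s a) (hπ1 : ∀ s, ∑ a, π s a = 1)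
    (Vmax : ℝ) (F : Finset (S → A → ℝ)) (hFbd : ∀ f ∈ F, ∀ s a, f s a ∈ Set.Icc (0 : ℝ) Vmax)
    (Eproxy : (S → A → ℝ) → ℝ) (hE0 : ∀ f ∈ F, 0 ≤ Eproxy f)
    (εr εF : ℝ) (lam : ℝ) (hlam : 0 ≤ lam)
    (fπ : S → A → ℝ) (hfπF : fπ ∈ F) (hfπE : Eproxy fπ ≤ εr)
    (hfπbe : Real.sqrt (∑ p : S × A, occ P γ s0 π p *
        (fπ p.1 p.2 - (R p.1 p.2 + γ * ∑ s', P p.1 p.2 s' * ∑ a', π s' a' * fπ s' a')) ^ 2)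
      ≤ Real.sqrt εF) :
    sInf {v : ℝ | ∃ f ∈ F, v = (∑ a, π s0 a * f s0 a) + lam * Eproxy f}
        ≤ ret P γ s0 R π + Real.sqrt εF / (1 - γ) + lam * εr
    ∧ ret P γ s0 R π - Real.sqrt εF / (1 - γ) - lam * εr
        ≤ sSup {v : ℝ | ∃ f ∈ F, v = (∑ a, π s0 a * f s0 a) - lam * Eproxy f} := by

  have hA : Nonempty A := by
    by_contra h
    have h1 := hπ1 s0
    rw [not_nonempty_iff] at h
    rw [Finset.univ_eq_empty, Finset.sum_empty] at h1
    norm_num at h1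
  obtain ⟨a0⟩ := hA
  have hVmax : (0:ℝ) ≤ Vmax := le_trans (hFbd fπ hfπF s0 a0).1 (hFbd fπ hfπF s0 a0).2
  have hfb : ∀ s a, |fπ s a| ≤ Vmax := fun s a =>
    abs_le.mpr ⟨by linarith [(hFbd fπ hfπF s a).1], (hFbd fπ hfπF s a).2⟩
  have hRb : ∀ s a, |R s a| ≤ Rmax := fun s a =>
    abs_le.mpr ⟨by linarith [(hR s a).1, le_trans (hR s0 a0).1 (hR s0 a0).2], (hR s a).2⟩
  have h1γ : (0:ℝ) < 1 - γ := by linarith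
  have htel := telescope P hP0 hP1 R Rmax hRb γ hγ0 hγ1 s0 π hπ0 hπ1 Vmax fπ hfb
  have hcs := cs_bound (occ P γ s0 π)
    (fun p : S × A => fπ p.1 p.2 -
      (R p.1 p.2 + γ * ∑ s', P p.1 p.2 s' * ∑ a', π s' a' * fπ s' a'))
    (occ_nonneg P hP0 π hπ0 s0 γ hγ0 hγ1)
    (occ_sum_one P hP0 hP1 π hπ0 hπ1 s0 γ hγ0 hγ1)
  have hkey : |(∑ a, π s0 a * fπ s0 a) - ret P γ s0 R π| ≤ Real.sqrt εF / (1 - γ) := by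
    rw [htel, abs_div, abs_of_pos h1γ]
    gcongr
    exact hcs.trans hfπbe
  have habs := abs_le.mp hkey
  have hE := mul_le_mul_of_nonneg_left hfπE hlam
  constructor
  · have hbdd : BddBelow {v : ℝ | ∃ f ∈ F, v = (∑ a, π s0 a * f s0 a) + lam * Eproxy f} := by
      have heq : {v : ℝ | ∃ f ∈ F, v = (∑ a, π s0 a * f s0 a) + lam * Eproxy f}
          = (fun f : S → A → ℝ => (∑ a, π s0 a * f s0 a) + lam * Eproxy f) '' ↑F := by
        ext v
        simp [Set.mem_image, eq_comm]
      rw [heq]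
      exact (F.finite_toSet.image _).bddBelow
    have hmem : (∑ a, π s0 a * fπ s0 a) + lam * Eproxy fπ ∈
        {v : ℝ | ∃ f ∈ F, v = (∑ a, π s0 a * f s0 a) + lam * Eproxy f} := ⟨fπ, hfπF, rfl⟩
    refine (csInf_le hbdd hmem).trans ?_
    have := habs.2
    linarith
  · have hbdd : BddAbove {v : ℝ | ∃ f ∈ F, v = (∑ a, π s0 a * f s0 a) - lam * Eproxy f} := by
      have heq : {v : ℝ | ∃ f ∈ F, v = (∑ a, π s0 a * f s0 a) - lam * Eproxy f}
          = (fun f : S → A → ℝ => (∑ a, π s0 a * f s0 a) - lam * Eproxy f) '' ↑F := by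
        ext v
        simp [Set.mem_image, eq_comm]
      rw [heq]
      exact (F.finite_toSet.image _).bddAbove
    have hmem : (∑ a, π s0 a * fπ s0 a) - lam * Eproxy fπ ∈
        {v : ℝ | ∃ f ∈ F, v = (∑ a, π s0 a * f s0 a) - lam * Eproxy f} := ⟨fπ, hfπF, rfl⟩
    refine le_trans ?_ (le_csSup hbdd hmem)
    have := habs.1
    linarith
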